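/- Let m ≥ 1 and let A_1, B_1, ..., A_m, B_m be reals satisfying 0 < A_1 < B_1 < A_2 < B_2 < ... < A_m < B_m. Define ρ_j = ((B_j − A_j)/A_j) · Π_{i ≠ j} (B_i − A_j)/(A_i − A_j), b_j = ρ_j/(1 + Σ_{i=1}^m ρ_i) for j = 1, ..., m, and b_0 = 1 − Σ_{j=1}^m b_j. Then for every k ∈ {1, ..., m}: 1 + Σ_{j=1}^m A_j b_j/(b_0 (A_j − B_k)) = 0. That is, B_1, ..., B_m are roots of the rational function λ ↦ 1 + Σ_{j=1}^m A_j b_j/(b_0(A_j − λ)), so the map 𝓛 of Lemma 2.2 sends (A_1 b_1, ..., A_m b_m, b_1, ..., b_m) to (A_1, ..., A_m, B_1, ..., B_m). -/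

import Mathlib

open Polynomial Finset

lemma lagrange_diff_aux (m : ℕ) (A B : ℕ → ℝ)
    (hinj : Set.InjOn A (Finset.range m)) (x : ℝ) :
    ∏ i ∈ Finset.range m, (B i - x) - ∏ i ∈ Finset.range m, (A i - x)
      = ∑ j ∈ Finset.range m,
          (∏ i ∈ Finset.range m, (B i - A j)) /
            (∏ i ∈ (Finset.range m).erase j, (A i - A j))
          * ∏ i ∈ (Finset.range m).erase j, (A i - x) := by
  classical
  set s := Finset.range m with hs
  set c : ℕ → ℝ := fun j =>
    (∏ i ∈ s, (B i - A j)) / (∏ i ∈ s.erase j, (A i - A j)) with hc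
  set p : ℝ[X] := ∏ i ∈ s, (C (B i) - X) with hp
  set q : ℝ[X] := ∏ i ∈ s, (C (A i) - X) with hq
  set g : ℝ[X] := ∑ j ∈ s, C (c j) * ∏ i ∈ s.erase j, (C (A i) - X) with hg
  have hdeg1 : ∀ (r : ℝ), (C r - X : ℝ[X]).degree = 1 := fun r => by
    rw [show (C r - X : ℝ[X]) = -(X - C r) by ring, degree_neg, degree_X_sub_C]
  have hlc1 : ∀ (r : ℝ), (C r - X : ℝ[X]).leadingCoeff = -1 := fun r => by
    rw [show (C r - X : ℝ[X]) = -(X - C r) by ring, leadingCoeff_neg,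
      (monic_X_sub_C r).leadingCoeff]
  have hdp : p.degree = m := by
    rw [hp, degree_prod]; simp [hdeg1, hs]
  have hdq : q.degree = m := by
    rw [hq, degree_prod]; simp [hdeg1, hs]
  have hlcp : p.leadingCoeff = (-1) ^ m := by
    rw [hp, leadingCoeff_prod]; simp [hlc1, hs]
  have hlcq : q.leadingCoeff = (-1) ^ m := by
    rw [hq, leadingCoeff_prod]; simp [hlc1, hs]
  have hp0 : p ≠ 0 := by
    intro h; rw [h, degree_zero] at hdp; exact (by simp : ((m : WithBot ℕ)) ≠ ⊥) hdp.symm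
  have hdpq : (p - q).degree < m := by
    have := degree_sub_lt (hdp.trans hdq.symm) hp0 (hlcp.trans hlcq.symm)
    rwa [hdp] at this
  have hdg : g.degree < m := by
    refine lt_of_le_of_lt (degree_sum_le _ _) ?_
    rw [Finset.sup_lt_iff (by exact WithBot.bot_lt_coe m)]
    intro j hj
    have hme : 1 ≤ m := by
      have := Finset.mem_range.mp (hs ▸ hj); omega
    have hde : (∏ i ∈ s.erase j, (C (A i) - X) : ℝ[X]).degree = ((m - 1 : ℕ) : WithBot ℕ) := by
      rw [degree_prod]
      simp [hdeg1, Finset.card_erase_of_mem hj, hs]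
      rw [Finset.card_erase_of_mem (by simpa [hs] using hj), Finset.card_range]
    calc (C (c j) * ∏ i ∈ s.erase j, (C (A i) - X)).degree
        ≤ (C (c j)).degree + (∏ i ∈ s.erase j, (C (A i) - X) : ℝ[X]).degree := degree_mul_le _ _
      _ ≤ 0 + ((m - 1 : ℕ) : WithBot ℕ) := by
          exact add_le_add degree_C_le (le_of_eq hde)
      _ < m := by
          rw [zero_add]
          exact_mod_cast Nat.sub_lt hme one_pos
  have herasene : ∀ j ∈ s, (∏ i ∈ s.erase j, (A i - A j)) ≠ 0 := by
    intro j hj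
    rw [Finset.prod_ne_zero_iff]
    intro i hi
    have hij := Finset.mem_erase.mp hi
    exact sub_ne_zero_of_ne (fun h => hij.1 (hinj (by simpa using hij.2) (by simpa using hj) h))
  have key : p - q = g := by
    refine eq_of_degrees_lt_of_eval_index_eq (v := A) s hinj ?_ ?_ ?_
    · rw [hs, Finset.card_range]; exact hdpq
    · rw [hs, Finset.card_range]; exact hdg
    · intro j hj
      have hqz : q.eval (A j) = 0 := by
        rw [hq, eval_prod]
        exact Finset.prod_eq_zero hj (by simp)
      have hgz : g.eval (A j) = c j * ∏ i ∈ s.erase j, (A i - A j) := by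
        rw [hg, eval_finset_sum]
        rw [Finset.sum_eq_single_of_mem j hj]
        · simp [eval_prod]
        · intro j' hj' hne
          have : j ∈ s.erase j' := Finset.mem_erase.mpr ⟨hne.symm, hj⟩
          rw [eval_mul, eval_prod]
          rw [Finset.prod_eq_zero this (by simp)]
          ring
      rw [eval_sub, hqz, sub_zero, hgz, hc, div_mul_cancel₀ _ (herasene j hj)]
      simp [hp, eval_prod]
  have := congrArg (Polynomial.eval x) key
  simpa [hp, hq, hg, eval_prod, eval_finset_sum, hc] using this

/-- Given reals `0 < A_1 < B_1 < … < A_m < B_m` (0-indexed), with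
`ρ_j = ((B_j − A_j)/A_j) · ∏_{i ≠ j} (B_i − A_j)/(A_i − A_j)`,
`b_j = ρ_j/(1 + ∑ᵢ ρ_i)` and `b_0 = 1 − ∑ⱼ b_j`, every `B_k` is a root of
`λ ↦ 1 + ∑ⱼ A_j b_j/(b_0(A_j − λ))`; i.e. the map `𝓛` sends
`(A_1 b_1, …, A_m b_m, b_1, …, b_m)` to `(A_1, …, A_m, B_1, …, B_m)`. -/
theorem stmt_10 (m : ℕ) (hm : 1 ≤ m) (A B : ℕ → ℝ)
    (hA0 : 0 < A 0)
    (hAB : ∀ j < m, A j < B j)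
    (hBA : ∀ j, j + 1 < m → B j < A (j + 1))
    (ρ : ℕ → ℝ)
    (hρ : ∀ j, ρ j = (B j - A j) / A j *
      ∏ i ∈ (Finset.range m).erase j, (B i - A j) / (A i - A j))
    (b : ℕ → ℝ)
    (hb : ∀ j, b j = ρ j / (1 + ∑ i ∈ Finset.range m, ρ i))
    (b0 : ℝ) (hb0 : b0 = 1 - ∑ j ∈ Finset.range m, b j) :
    ∀ k < m, 1 + ∑ j ∈ Finset.range m, A j * b j / (b0 * (A j - B k)) = 0 := by
  classical
  -- ordering facts
  have hAAlt : ∀ j, j < m → ∀ i, i < j → A i < A j := by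
    intro j
    induction j with
    | zero => intro _ i hi; exact absurd hi (Nat.not_lt_zero i)
    | succ j ih =>
      intro hj i hi
      have hj' : j < m := Nat.lt_of_succ_lt hj
      have h1 : A j < A (j + 1) := lt_trans (hAB j hj') (hBA j hj)
      rcases Nat.lt_succ_iff_lt_or_eq.mp hi with h | h
      · exact lt_trans (ih hj' i h) h1
      · subst h; exact h1
  have hApos : ∀ i, i < m → 0 < A i := by
    intro i hi
    rcases Nat.eq_zero_or_pos i with h | h
    · subst h; exact hA0
    · exact lt_trans hA0 (hAAlt i hi 0 h)
  have hAle : ∀ i j, i ≤ j → j < m → A i ≤ A j := by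
    intro i j hij hj
    rcases Nat.lt_or_ge i j with h | h
    · exact le_of_lt (hAAlt j hj i h)
    · have : i = j := le_antisymm hij h
      subst this; exact le_rfl
  have hinj : Set.InjOn A (Finset.range m) := by
    intro i hi j hj hij
    by_contra hne
    rcases Ne.lt_or_gt hne with h | h
    · exact absurd hij (ne_of_lt (hAAlt j (by simpa using hj) i h))
    · exact absurd hij.symm (ne_of_lt (hAAlt i (by simpa using hi) j h))
  have hABne : ∀ i k, i < m → k < m → A i - B k ≠ 0 := by
    intro i k hi hk
    rcases le_or_gt i k with h | h
    · exact sub_ne_zero_of_ne (ne_of_lt (lt_of_le_of_lt (hAle i k h hk) (hAB k hk)))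
    · have hk1 : k + 1 ≤ i := h
      have hk1m : k + 1 < m := lt_of_le_of_lt hk1 hi
      exact sub_ne_zero_of_ne (ne_of_gt (lt_of_lt_of_le (hBA k hk1m) (hAle (k + 1) i hk1 hi)))
  have herasene : ∀ j ∈ Finset.range m, (∏ i ∈ (Finset.range m).erase j, (A i - A j)) ≠ 0 := by
    intro j hj
    rw [Finset.prod_ne_zero_iff]
    intro i hi
    have hij := Finset.mem_erase.mp hi
    exact sub_ne_zero_of_ne (fun h => hij.1 (hinj (by simpa using hij.2) (by simpa using hj) h))
  set c : ℕ → ℝ := fun j =>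
    (∏ i ∈ Finset.range m, (B i - A j)) /
      (∏ i ∈ (Finset.range m).erase j, (A i - A j)) with hc
  -- c j = A j * ρ j
  have hcρ : ∀ j ∈ Finset.range m, c j = A j * ρ j := by
    intro j hj
    have hjm := Finset.mem_range.mp hj
    have hAj : A j ≠ 0 := ne_of_gt (hApos j hjm)
    have h1 : ∏ i ∈ Finset.range m, (B i - A j)
        = (B j - A j) * ∏ i ∈ (Finset.range m).erase j, (B i - A j) :=
      (Finset.mul_prod_erase _ _ hj).symm
    simp only [hc]
    rw [hρ j, Finset.prod_div_distrib, h1, mul_div_assoc, ← mul_assoc,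
      mul_comm (A j) ((B j - A j) / A j), div_mul_cancel₀ _ hAj]
  -- the Lagrange identity
  have key : ∀ x : ℝ, ∏ i ∈ Finset.range m, (B i - x) - ∏ i ∈ Finset.range m, (A i - x)
      = ∑ j ∈ Finset.range m, c j * ∏ i ∈ (Finset.range m).erase j, (A i - x) :=
    fun x => lagrange_diff_aux m A B hinj x
  -- 1 + Σρ ≠ 0
  have hprodApos : 0 < ∏ i ∈ Finset.range m, A i :=
    Finset.prod_pos (fun i hi => hApos i (Finset.mem_range.mp hi))
  have hprodBpos : 0 < ∏ i ∈ Finset.range m, B i :=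
    Finset.prod_pos (fun i hi =>
      lt_trans (hApos i (Finset.mem_range.mp hi)) (hAB i (Finset.mem_range.mp hi)))
  set S : ℝ := 1 + ∑ i ∈ Finset.range m, ρ i with hS
  have hzero := key 0
  simp only [sub_zero] at hzero
  have hsum0 : ∑ j ∈ Finset.range m, c j * ∏ i ∈ (Finset.range m).erase j, A i
      = (∑ i ∈ Finset.range m, ρ i) * ∏ i ∈ Finset.range m, A i := by
    rw [Finset.sum_mul]
    refine Finset.sum_congr rfl (fun j hj => ?_)
    rw [hcρ j hj, ← Finset.mul_prod_erase _ _ hj]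
    ring
  have hSprod : S * ∏ i ∈ Finset.range m, A i = ∏ i ∈ Finset.range m, B i := by
    rw [hS, add_mul, one_mul, ← hsum0, ← hzero]
    ring
  have hSne : S ≠ 0 := by
    intro h
    rw [h, zero_mul] at hSprod
    exact absurd hSprod.symm (ne_of_gt hprodBpos)
  have hb0S : b0 = 1 / S := by
    rw [hb0]
    have hρS : ∑ i ∈ Finset.range m, ρ i = S - 1 := by rw [hS]; ring
    have h2 : ∑ j ∈ Finset.range m, b j = (∑ j ∈ Finset.range m, ρ j) / S := by
      rw [Finset.sum_div]
      exact Finset.sum_congr rfl (fun j _ => hb j)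
    rw [h2, hρS]
    field_simp
    ring
  -- main computation
  intro k hk
  have hterm : ∀ j ∈ Finset.range m,
      A j * b j / (b0 * (A j - B k)) = c j / (A j - B k) := by
    intro j hj
    have hjm := Finset.mem_range.mp hj
    have hne : A j - B k ≠ 0 := hABne j k hjm hk
    rw [hb j, hb0S, hcρ j hj]
    field_simp
  rw [Finset.sum_congr rfl hterm]
  have hBk := key (B k)
  have hBzero : ∏ i ∈ Finset.range m, (B i - B k) = 0 :=
    Finset.prod_eq_zero (Finset.mem_range.mpr hk) (sub_self _)
  rw [hBzero, zero_sub] at hBk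
  have hprodABk : (∏ i ∈ Finset.range m, (A i - B k)) ≠ 0 := by
    rw [Finset.prod_ne_zero_iff]
    exact fun i hi => hABne i k (Finset.mem_range.mp hi) hk
  have hsumfrac : ∑ j ∈ Finset.range m, c j / (A j - B k)
      = (∑ j ∈ Finset.range m, c j * ∏ i ∈ (Finset.range m).erase j, (A i - B k)) /
        ∏ i ∈ Finset.range m, (A i - B k) := by
    rw [Finset.sum_div]
    refine Finset.sum_congr rfl (fun j hj => ?_)
    have herase' : (∏ i ∈ (Finset.range m).erase j, (A i - B k)) ≠ 0 := by
      rw [Finset.prod_ne_zero_iff]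
      intro i hi
      exact hABne i k (Finset.mem_range.mp (Finset.mem_of_mem_erase hi)) hk
    rw [← Finset.mul_prod_erase _ _ hj]
    exact (mul_div_mul_right _ _ herase').symm
  rw [hsumfrac, ← hBk, neg_div, div_self hprodABk]
  ring
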